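/- arXiv:alg-geom/9706009 — 3 statements merged into one kernel-verified Lean document; each statement's English description precedes it below -/
import Mathlib

section
/- Let k be a field and U ⊆ k((z)) a k-subspace containing a nonzero element. Suppose U has an element of maximal order m, i.e. there exists g ∈ U of order m and every nonzero element of U has order ≤ m. If f₋ ∈ 1 + z^{-1}k[z^{-1}] and f₊ ∈ 1 + z·k[[z]] are units of k((z)) with f₋·U = f₊·U, then f₋ = f₊ = 1. -/
open HahnSeries

variable {k : Type*} [Field k]

/-- The substitution `z ↦ -z` on formal Laurent series. -/
noncomputable def sigma0 (f : LaurentSeries k) : LaurentSeries k where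
  coeff i := (-1 : k) ^ i * f.coeff i
  isPWO_support' := f.isPWO_support'.mono (by
    intro i hi
    simp only [Function.mem_support] at hi ⊢
    exact fun h => hi (by rw [h, mul_zero]))

/-- The pairing `⟨f,g⟩ = Res_{z=0} f(z)·g(-z) dz`. -/
noncomputable def lpair (f g : LaurentSeries k) : k := (f * sigma0 g).coeff (-1)

/-- `k[[z]]` inside `k((z))`. -/
def posPart (k : Type*) [Field k] : Submodule k (LaurentSeries k) where
  carrier := {f | ∀ i : ℤ, i < 0 → f.coeff i = 0}
  add_mem' := by intro f g hf hg i hi; simp [hf i hi, hg i hi]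
  zero_mem' := by intro i hi; simp
  smul_mem' := by intro c f hf i hi; simp [hf i hi]

/-- Orthogonal complement with respect to `lpair`. -/
def lorth (U : Submodule k (LaurentSeries k)) : Submodule k (LaurentSeries k) where
  carrier := {f | ∀ u ∈ U, lpair f u = 0}
  add_mem' := by
    intro f g hf hg u hu
    have h : lpair (f + g) u = lpair f u + lpair g u := by
      simp [lpair, add_mul]
    rw [h, hf u hu, hg u hu, add_zero]
  zero_mem' := by intro u hu; simp [lpair]
  smul_mem' := by
    intro c f hf u hu
    have h : lpair (c • f) u = c * lpair f u := by
      simp only [lpair]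
      rw [← HahnSeries.single_zero_mul_eq_smul, mul_assoc, HahnSeries.single_zero_mul_eq_smul,
        HahnSeries.coeff_smul]
      rfl
    rw [h, hf u hu, mul_zero]

/-- Even Laurent series: `k((z²))`. -/
def evenPart (k : Type*) [Field k] : Submodule k (LaurentSeries k) where
  carrier := {f | ∀ i : ℤ, Odd i → f.coeff i = 0}
  add_mem' := by intro f g hf hg i hi; simp [hf i hi, hg i hi]
  zero_mem' := by intro i hi; simp
  smul_mem' := by intro c f hf i hi; simp [hf i hi]

/-- Odd Laurent series: `z·k((z²))`. -/
def oddPart (k : Type*) [Field k] : Submodule k (LaurentSeries k) where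
  carrier := {f | ∀ i : ℤ, Even i → f.coeff i = 0}
  add_mem' := by intro f g hf hg i hi; simp [hf i hi, hg i hi]
  zero_mem' := by intro i hi; simp
  smul_mem' := by intro c f hf i hi; simp [hf i hi]

lemma laurent_mul_smul_comm (g : LaurentSeries k) (c : k) (u : LaurentSeries k) :
    g * (c • u) = c • (g * u) := by
  rw [← HahnSeries.single_zero_mul_eq_smul, ← mul_assoc,
    mul_comm g (HahnSeries.single 0 c), mul_assoc, HahnSeries.single_zero_mul_eq_smul]

/-- Multiplication by `g` as a `k`-linear endomorphism of `k((z))`. -/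
noncomputable def mulL (g : LaurentSeries k) : LaurentSeries k →ₗ[k] LaurentSeries k where
  toFun u := g * u
  map_add' u v := mul_add g u v
  map_smul' c u := laurent_mul_smul_comm g c u

/-- if `U` has an element of maximal order and `f₋·U = f₊·U` with
`f₋ ∈ 1 + z⁻¹k[z⁻¹]`, `f₊ ∈ 1 + z·k[[z]]`, then `f₋ = f₊ = 1`. -/
theorem statement11 (U : Submodule k (LaurentSeries k)) (m : ℤ)
    (g : LaurentSeries k) (hgU : g ∈ U) (hg0 : g ≠ 0) (hgo : g.order = m)
    (hmax : ∀ u ∈ U, u ≠ (0 : LaurentSeries k) → u.order ≤ m)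
    (fm fp : LaurentSeries k)
    (hfm0 : fm.coeff 0 = 1) (hfm : ∀ i : ℤ, 0 < i → fm.coeff i = 0)
    (hfp0 : fp.coeff 0 = 1) (hfp : ∀ i : ℤ, i < 0 → fp.coeff i = 0)
    (heq : U.map (mulL fm) = U.map (mulL fp)) :
    fm = 1 ∧ fp = 1 := by

  classical
  have hfpne : fp ≠ 0 := fun h => by simp [h] at hfp0
  have hfmne : fm ≠ 0 := fun h => by simp [h] at hfm0
  have hfpord : fp.order = 0 := by
    refine le_antisymm (HahnSeries.order_le_of_coeff_ne_zero (by rw [hfp0]; exact one_ne_zero)) ?_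
    by_contra h
    push_neg at h
    exact HahnSeries.coeff_order_eq_zero.not.2 hfpne (hfp _ h)
  -- fp * g ∈ fm • U
  have hmem : (mulL fp) g ∈ U.map (mulL fm) := by
    rw [heq]
    exact ⟨g, hgU, rfl⟩
  obtain ⟨u, huU, hu⟩ := hmem
  have hu' : fm * u = fp * g := hu
  have hune : u ≠ 0 := by
    rintro rfl
    rw [mul_zero] at hu'
    exact mul_ne_zero hfpne hg0 hu'.symm
  have hord : fm.order + u.order = m := by
    have := congrArg HahnSeries.order hu'
    rwa [HahnSeries.order_mul hfmne hune, HahnSeries.order_mul hfpne hg0, hfpord, hgo,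
      zero_add] at this
  have hfm_ord : (0 : ℤ) ≤ fm.order := by
    have := hmax u huU hune
    omega
  have hfm1 : fm = 1 := by
    ext i
    rcases lt_trichotomy i 0 with hi | hi | hi
    · rw [HahnSeries.coeff_eq_zero_of_lt_order (lt_of_lt_of_le hi hfm_ord),
        HahnSeries.coeff_one, if_neg (by omega)]
    · subst hi; rw [hfm0, HahnSeries.coeff_one, if_pos rfl]
    · rw [hfm _ hi, HahnSeries.coeff_one, if_neg (by omega)]
  have hUfp : U.map (mulL fp) = U := by
    rw [← heq, hfm1]
    ext x
    constructor
    · rintro ⟨y, hy, rfl⟩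
      simpa [mulL] using hy
    · intro hx
      exact ⟨x, hx, one_mul x⟩
  refine ⟨hfm1, ?_⟩
  by_contra hfpne1
  set h := fp - 1 with hh
  have hhne : h ≠ 0 := sub_ne_zero.2 hfpne1
  have hcoeff : ∀ i : ℤ, i ≤ 0 → h.coeff i = 0 := by
    intro i hi
    rcases lt_or_eq_of_le hi with hi | hi
    · simp [hh, hfp i hi, HahnSeries.coeff_one, hi.ne]
    · subst hi; simp [hh, hfp0, HahnSeries.coeff_one]
  have hhord : (0 : ℤ) < h.order := by
    by_contra hc
    push_neg at hc
    exact HahnSeries.coeff_order_eq_zero.not.2 hhne (hcoeff _ hc)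
  have hfpgU : fp * g ∈ U := by
    rw [← hUfp]; exact ⟨g, hgU, rfl⟩
  have hhgU : h * g ∈ U := by
    have : h * g = fp * g - g := by rw [hh, sub_mul, one_mul]
    rw [this]
    exact sub_mem hfpgU hgU
  have hhgne : h * g ≠ 0 := mul_ne_zero hhne hg0
  have := hmax _ hhgU hhgne
  rw [HahnSeries.order_mul hhne hg0, hgo] at this
  omega
end

section
/- Let k be a field with char(k) ≠ 2, V = k((z)) with pairing <f,g> = Res_{z=0} f(z)g(-z) dz, and let U ⊆ V be a subspace with U = U^⊥. Let B = {f ∈ V : f·U ⊆ U} be the stabilizer algebra of U. Then B is closed under the involution f(z) ↦ f(-z): if f ∈ B then f(-z) ∈ B. -/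
open HahnSeries

variable {k : Type*} [Field k]

lemma sigma0_coeff (f : LaurentSeries k) (i : ℤ) : (sigma0 f).coeff i = (-1:k)^i * f.coeff i := rfl

lemma sigma0_support (f : LaurentSeries k) : (sigma0 f).support = f.support := by
  ext i
  constructor
  · intro h hc
    exact h (by rw [sigma0_coeff, hc, mul_zero])
  · intro h hc
    rw [sigma0_coeff] at hc
    exact h ((mul_eq_zero.mp hc).resolve_left (zpow_ne_zero _ (by norm_num)))

lemma sigma0_mul (a b : LaurentSeries k) : sigma0 (a * b) = sigma0 a * sigma0 b := by
  ext n
  have hset : Finset.antidiagonal (sigma0 a).isPWO_support (sigma0 b).isPWO_support n =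
      Finset.antidiagonal a.isPWO_support b.isPWO_support n := by
    ext ij
    simp only [Finset.mem_addAntidiagonal, Set.mem_setOf_eq, sigma0_support]
  rw [sigma0_coeff, HahnSeries.coeff_mul, HahnSeries.coeff_mul, hset, Finset.mul_sum]
  apply Finset.sum_congr rfl
  intro ij hij
  rw [Finset.mem_addAntidiagonal] at hij
  rw [sigma0_coeff, sigma0_coeff, ← hij.2.2, zpow_add₀ (by norm_num : (-1:k) ≠ 0)]
  ring

/-- the stabilizer algebra `B = {f : f·U ⊆ U}` of a maximal totally
isotropic subspace `U` is stable under the involution `f(z) ↦ f(-z)`. -/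
theorem statement12 (h2 : (2 : k) ≠ 0) (U : Submodule k (LaurentSeries k))
    (hU : lorth U = U) (f : LaurentSeries k) (hf : ∀ u ∈ U, f * u ∈ U) :
    ∀ u ∈ U, sigma0 f * u ∈ U := by
  intro u hu
  rw [← hU]
  intro v hv
  have key : lpair (sigma0 f * u) v = lpair u (f * v) := by
    unfold lpair
    rw [sigma0_mul]
    congr 1
    ring
  rw [key]
  have hu' : u ∈ lorth U := by rw [hU]; exact hu
  exact hu' (f * v) (hf v hv)
end

section
/- Let A be a complete, linearly topologized commutative ring whose topology is defined by a decreasing sequence of ideals, with definition ideal J. If A/J is Noetherian and J/J² is a finitely generated A/J-module, then A is Noetherian. In particular, if A/J ≅ k is a field and dim_k(J/J²) < ∞, then A is Noetherian. -/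
open MvPolynomial

section Statement14Aux

variable {A : Type*} [CommRing A]

private lemma st14_hc_mul {σ R : Type*} [CommRing R] {b : MvPolynomial σ R} {i : ℕ}
    (hb : b.IsHomogeneous i) (a : MvPolynomial σ R) (n : ℕ) :
    homogeneousComponent n (a * b) =
      if i ≤ n then homogeneousComponent (n - i) a * b else 0 := by
  classical
  letI : GradedAlgebra (homogeneousSubmodule σ R) := MvPolynomial.gradedAlgebra
  have h := DirectSum.coe_decompose_mul_of_right_mem (𝒜 := homogeneousSubmodule σ R)
      (a := a) (b := b) (i := i) n hb
  have e : ∀ (x : MvPolynomial σ R) (m : ℕ),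
      ((DirectSum.decompose (homogeneousSubmodule σ R) x) m : MvPolynomial σ R)
        = homogeneousComponent m x := fun x m =>
    MvPolynomial.decomposition.decompose'_apply x m
  rw [e, e] at h
  exact h

private lemma st14_prod_pow_mem {ι : Type*} (T : Ideal A) (x : ι → A) (hx : ∀ i, x i ∈ T)
    (F : Finset ι) (k : ι → ℕ) : (∏ i ∈ F, x i ^ k i) ∈ T ^ (∑ i ∈ F, k i) := by
  classical
  induction F using Finset.induction with
  | empty => simp [Ideal.one_eq_top]
  | insert _ _ hj ih =>
    rw [Finset.prod_insert hj, Finset.sum_insert hj, pow_add]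
    exact Ideal.mul_mem_mul (Ideal.pow_mem_pow (hx _) _) ih

private lemma st14_eval_homog_mem {σ : Type*} (x : σ → A) (T : Ideal A) (hx : ∀ i, x i ∈ T)
    {g : MvPolynomial σ A} {p : ℕ} (hg : g.IsHomogeneous p)
    (C : Ideal A) (hcoeff : ∀ d, coeff d g ∈ C) :
    eval x g ∈ C * T ^ p := by
  rw [eval_eq]
  refine Ideal.sum_mem _ fun d hd => ?_
  have hdeg : d.degree = p := by
    by_contra h
    exact (mem_support_iff.mp hd) (hg.coeff_eq_zero h)
  have hprod : (∏ i ∈ d.support, x i ^ d i) ∈ T ^ p := by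
    have := st14_prod_pow_mem T x hx d.support d
    rwa [show (∑ i ∈ d.support, d i) = p from hdeg ▸ rfl] at this
  exact Ideal.mul_mem_mul (hcoeff d) hprod

end Statement14Aux

/-- EGA 0.7.2.6: let `A` be a commutative ring, complete and separated
for the linear topology defined by a decreasing sequence of ideals `I n`, and let `J`
be an ideal of definition (`J` is open and `Jᵐ → 0`).  If `A/J` is Noetherian and
`J/J²` is a finitely generated `A/J`-module (i.e. `J = span s ⊔ J²` for a finite set
`s ⊆ J`), then `A` is Noetherian.  (The special case `A/J ≅ k` a field and
`dim_k J/J² < ∞` is an instance of these hypotheses.) -/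
theorem statement14 (A : Type*) [CommRing A] (I : ℕ → Ideal A) (hanti : Antitone I)
    (hcomplete : ∀ a : ℕ → A, (∀ n m : ℕ, n ≤ m → a m - a n ∈ I n) →
      ∃! x : A, ∀ n : ℕ, x - a n ∈ I n)
    (J : Ideal A) (hopen : ∃ n, I n ≤ J) (hnil : ∀ n : ℕ, ∃ m : ℕ, J ^ m ≤ I n)
    (hq : IsNoetherianRing (A ⧸ J))
    (hfg : ∃ s : Finset A, (↑s : Set A) ⊆ J ∧ J = Ideal.span ↑s ⊔ J ^ 2) :
    IsNoetherianRing A := by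
  classical
  obtain ⟨s, hsJ, hJfg⟩ := hfg
  -- separation: the intersection of the `I n` is zero
  have sep : ∀ u : A, (∀ n, u ∈ I n) → u = 0 := by
    intro u hu
    obtain ⟨x, -, hx'⟩ := hcomplete (fun _ => 0) (by simp)
    have h1 := hx' u (by simpa using hu)
    have h2 := hx' 0 (by simp)
    rw [h1, ← h2]
  set σ := {a : A // a ∈ s} with hσ
  set x : σ → A := Subtype.val with hx
  set S : Ideal A := Ideal.span (s : Set A) with hS
  have hxS : ∀ i : σ, x i ∈ S := fun i => Ideal.subset_span i.2
  have hSJ : S ≤ J := Ideal.span_le.mpr hsJ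
  -- the ideal of values of homogeneous polynomials of degree p
  set ev : MvPolynomial σ A →ₐ[A] A := aeval x with hev
  have hev_eval : ∀ g : MvPolynomial σ A, ev g = eval x g := fun g => rfl
  set E : ℕ → Ideal A := fun p =>
    Submodule.map ev.toLinearMap (homogeneousSubmodule σ A p) with hE
  have hmemE : ∀ (p : ℕ) (z : A),
      z ∈ E p ↔ ∃ g : MvPolynomial σ A, g.IsHomogeneous p ∧ ev g = z := by
    intro p z
    constructor
    · rintro ⟨g, hg, rfl⟩
      exact ⟨g, (mem_homogeneousSubmodule _ _).mp hg, rfl⟩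
    · rintro ⟨g, hg, rfl⟩
      exact ⟨g, (mem_homogeneousSubmodule _ _).mpr hg, rfl⟩
  have hE0 : ∀ z : A, z ∈ E 0 :=
    fun z => (hmemE 0 z).mpr ⟨C z, isHomogeneous_C _ _, by simp [hev]⟩
  have hSE1 : S ≤ E 1 := by
    rw [hS]
    refine Ideal.span_le.mpr fun a ha => (hmemE 1 a).mpr ⟨X ⟨a, ha⟩, isHomogeneous_X _ _, ?_⟩
    simp [hev, hx]
  have hEmul : ∀ p q : ℕ, E p * E q ≤ E (p + q) := by
    intro p q
    refine Ideal.mul_le.mpr fun z hz w hw => ?_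
    obtain ⟨g, hg, rfl⟩ := (hmemE p z).mp hz
    obtain ⟨h, hh, rfl⟩ := (hmemE q w).mp hw
    exact (hmemE _ _).mpr ⟨g * h, hg.mul hh, map_mul _ _ _⟩
  have hSEp : ∀ p : ℕ, S ^ p ≤ E p := by
    intro p
    induction p with
    | zero => exact fun z _ => hE0 z
    | succ p ih =>
      rw [pow_succ]
      exact le_trans (Ideal.mul_mono ih hSE1) (hEmul p 1)
  have hES : ∀ p : ℕ, E p ≤ S ^ p := by
    intro p z hz
    obtain ⟨g, hg, rfl⟩ := (hmemE p z).mp hz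
    rw [hev_eval]
    have := st14_eval_homog_mem x S hxS hg ⊤ (fun d => trivial)
    rwa [Ideal.top_mul] at this
  -- J ^ p ≤ E p ⊔ J ^ (p + 1)
  have hJE : ∀ p : ℕ, J ^ p ≤ E p ⊔ J ^ (p + 1) := by
    intro p
    induction p with
    | zero => exact fun z _ => Submodule.mem_sup_left (hE0 z)
    | succ p ih =>
      have hJ1 : J ≤ E 1 ⊔ J ^ 2 := by
        conv_lhs => rw [hJfg]
        exact sup_le_sup_right hSE1 _
      calc J ^ (p + 1) = J ^ p * J := pow_succ J p
        _ ≤ (E p ⊔ J ^ (p + 1)) * (E 1 ⊔ J ^ 2) := Ideal.mul_mono ih hJ1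
        _ ≤ E (p + 1) ⊔ J ^ (p + 2) := by
            rw [Ideal.sup_mul, Ideal.mul_sup, Ideal.mul_sup]
            refine sup_le (sup_le ?_ ?_) (sup_le ?_ ?_)
            · exact le_sup_of_le_left (hEmul p 1)
            · refine le_sup_of_le_right ?_
              calc E p * J ^ 2 ≤ S ^ p * J ^ 2 := Ideal.mul_mono_left (hES p)
                _ ≤ J ^ p * J ^ 2 := Ideal.mul_mono_left (Ideal.pow_right_mono hSJ p)
                _ = J ^ (p + 2) := by rw [← pow_add]
            · refine le_sup_of_le_right ?_
              calc J ^ (p+1) * E 1 ≤ J ^ (p+1) * S ^ 1 := Ideal.mul_mono_right (hES 1)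
                _ ≤ J ^ (p+1) * J ^ 1 := Ideal.mul_mono_right (Ideal.pow_right_mono hSJ 1)
                _ = J ^ (p + 2) := by rw [← pow_add]
            · refine le_sup_of_le_right ?_
              calc J ^ (p+1) * J ^ 2 = J ^ (p + 3) := by rw [← pow_add]
                _ ≤ J ^ (p + 2) := Ideal.pow_le_pow_right (by omega)
  -- the quotient polynomial ring and reduction map
  set π : MvPolynomial σ A →+* MvPolynomial σ (A ⧸ J) :=
    MvPolynomial.map (Ideal.Quotient.mk J) with hπ
  have hlift : ∀ (F : MvPolynomial σ (A ⧸ J)) (d : ℕ), F.IsHomogeneous d →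
      ∃ g : MvPolynomial σ A, g.IsHomogeneous d ∧ π g = F := by
    intro F d hF
    refine ⟨∑ α ∈ F.support, monomial α
      (Function.surjInv Ideal.Quotient.mk_surjective (coeff α F)), ?_, ?_⟩
    · refine IsHomogeneous.sum _ _ _ fun α hα => isHomogeneous_monomial _ ?_
      by_contra h
      exact (mem_support_iff.mp hα) (hF.coeff_eq_zero h)
    · rw [map_sum]
      conv_rhs => rw [F.as_sum]
      refine Finset.sum_congr rfl fun α hα => ?_
      rw [hπ, MvPolynomial.map_monomial,
        Function.surjInv_eq Ideal.Quotient.mk_surjective]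
  have hker : ∀ (g : MvPolynomial σ A) (p : ℕ), g.IsHomogeneous p → π g = 0 →
      ev g ∈ J ^ (p + 1) := by
    intro g p hg hg0
    have hcoeff : ∀ d, coeff d g ∈ J := by
      intro d
      have : coeff d (π g) = 0 := by rw [hg0]; simp
      rw [hπ, coeff_map] at this
      exact (Ideal.Quotient.eq_zero_iff_mem).mp this
    rw [hev_eval]
    have := st14_eval_homog_mem x S hxS hg J hcoeff
    refine le_trans ?_ (le_of_eq (pow_succ' J p).symm) this
    exact Ideal.mul_mono_right (Ideal.pow_right_mono hSJ p)
  -- now fix an ideal K and prove it is finitely generated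
  rw [isNoetherianRing_iff_ideal_fg]
  intro K
  haveI := hq
  haveI : IsNoetherianRing (MvPolynomial σ (A ⧸ J)) := inferInstance
  set U : Set (MvPolynomial σ (A ⧸ J)) :=
    {F | ∃ (p : ℕ) (f : MvPolynomial σ A),
      f.IsHomogeneous p ∧ π f = F ∧ ev f ∈ K ⊔ J ^ (p + 1)} with hU
  obtain ⟨v, hv⟩ := IsNoetherian.noetherian (Ideal.span U)
  have hfin : ∀ g ∈ v, ∃ t : Finset (MvPolynomial σ (A ⧸ J)),
      ↑t ⊆ U ∧ g ∈ Ideal.span (t : Set (MvPolynomial σ (A ⧸ J))) := by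
    intro g hg
    refine Submodule.mem_span_finite_of_mem_span ?_
    show g ∈ Ideal.span U
    rw [← hv]
    exact Submodule.subset_span hg
  choose t ht1 ht2 using hfin
  set T : Finset (MvPolynomial σ (A ⧸ J)) := v.attach.biUnion (fun g => t g.1 g.2) with hT
  have hTU : (T : Set (MvPolynomial σ (A ⧸ J))) ⊆ U := by
    intro F hF
    rw [hT] at hF
    simp only [Finset.coe_biUnion, Set.mem_iUnion, Finset.mem_coe] at hF
    obtain ⟨g, hg, hFg⟩ := hF
    exact ht1 g.1 g.2 hFg
  have hspanT : Ideal.span (T : Set (MvPolynomial σ (A ⧸ J))) = Ideal.span U := by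
    refine le_antisymm (Ideal.span_le.mpr (hTU.trans Ideal.subset_span)) ?_
    rw [← hv]
    refine Ideal.span_le.mpr fun g hg => ?_
    refine Submodule.span_mono ?_ (ht2 g hg)
    intro F hF
    rw [hT]
    simp only [Finset.coe_biUnion, Set.mem_iUnion, Finset.mem_coe]
    exact ⟨⟨g, hg⟩, Finset.mem_attach _ _, hF⟩
  -- index the chosen generators
  have hUmem : ∀ i : {F // F ∈ T}, ∃ (p : ℕ) (f : MvPolynomial σ A),
      f.IsHomogeneous p ∧ π f = i.1 ∧ ev f ∈ K ⊔ J ^ (p + 1) := fun i => hTU i.2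
  choose n f hfhom hfπ hfev using hUmem
  have hy : ∀ i : {F // F ∈ T}, ∃ y : A, y ∈ K ∧ ev (f i) - y ∈ J ^ (n i + 1) := by
    intro i
    obtain ⟨k, hk, w, hw, hkw⟩ := Submodule.mem_sup.mp (hfev i)
    exact ⟨k, hk, by rw [← hkw]; simpa using hw⟩
  choose y hyK hyJ using hy
  -- the key approximation step
  have key : ∀ (p : ℕ) (z : A), z ∈ K → z ∈ J ^ p →
      ∃ d : {F // F ∈ T} → A, (∀ i, d i ∈ J ^ (p - n i)) ∧
        (z - ∑ i, d i * y i) ∈ K ∧ (z - ∑ i, d i * y i) ∈ J ^ (p + 1) := by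
    intro p z hzK hzJ
    obtain ⟨e, he, w, hw, hewz⟩ := Submodule.mem_sup.mp (hJE p hzJ)
    obtain ⟨g, hg, hge⟩ := (hmemE p e).mp he
    have hπg : π g ∈ Ideal.span (T : Set (MvPolynomial σ (A ⧸ J))) := by
      rw [hspanT]
      refine Ideal.subset_span ?_
      refine ⟨p, g, hg, rfl, ?_⟩
      have : ev g = z - w := by rw [hge, ← hewz]; ring
      rw [this]
      exact Submodule.sub_mem _ (Submodule.mem_sup_left hzK) (Submodule.mem_sup_right hw)
    rw [show (T : Set (MvPolynomial σ (A ⧸ J)))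
        = Set.range (fun i : {F // F ∈ T} => (i : MvPolynomial σ (A ⧸ J)))
      from (Subtype.range_val).symm] at hπg
    obtain ⟨c, hc⟩ := Ideal.mem_span_range_iff_exists_fun.mp hπg
    have hπgh : (π g).IsHomogeneous p := hg.map _
    have hcomp : π g = ∑ i, (if n i ≤ p then
        homogeneousComponent (p - n i) (c i) else 0) * π (f i) := by
      have h1 : homogeneousComponent p (π g) = π g := by
        rw [homogeneousComponent_of_mem ((mem_homogeneousSubmodule _ _).mpr hπgh),
          if_pos rfl]
      calc π g = homogeneousComponent p (π g) := h1.symm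
        _ = homogeneousComponent p (∑ i, c i * (fun i : {F // F ∈ T} =>
            (i : MvPolynomial σ (A ⧸ J))) i) := by rw [hc]
        _ = ∑ i, homogeneousComponent p (c i * π (f i)) := by
            rw [map_sum]
            exact Finset.sum_congr rfl fun i _ => by rw [hfπ i]
        _ = ∑ i, (if n i ≤ p then
            homogeneousComponent (p - n i) (c i) else 0) * π (f i) := by
            refine Finset.sum_congr rfl fun i _ => ?_
            rw [st14_hc_mul ((hfhom i).map _) (c i) p]
            split_ifs
            · rfl
            · simp
    have hqex : ∀ i : {F // F ∈ T}, ∃ q : MvPolynomial σ A,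
        q.IsHomogeneous (p - n i) ∧
        π q = (if n i ≤ p then homogeneousComponent (p - n i) (c i) else 0) ∧
        (¬ n i ≤ p → q = 0) := by
      intro i
      by_cases hni : n i ≤ p
      · obtain ⟨q, hq1, hq2⟩ := hlift (homogeneousComponent (p - n i) (c i)) (p - n i)
          (homogeneousComponent_isHomogeneous _ _)
        exact ⟨q, hq1, by rw [hq2, if_pos hni], fun h => absurd hni h⟩
      · exact ⟨0, isHomogeneous_zero _ _ _, by rw [map_zero, if_neg hni], fun _ => rfl⟩
    choose q hqhom hqπ hq0 using hqex
    set h := g - ∑ i, q i * f i with hh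
    have hπh : π h = 0 := by
      rw [hh, map_sub, map_sum]
      simp only [map_mul, hqπ]
      rw [← hcomp, sub_self]
    have hhhom : h.IsHomogeneous p := by
      refine hg.sub (IsHomogeneous.sum _ _ _ fun i _ => ?_)
      by_cases hni : n i ≤ p
      · have := (hqhom i).mul (hfhom i)
        rwa [Nat.sub_add_cancel hni] at this
      · rw [hq0 i hni, zero_mul]
        exact isHomogeneous_zero _ _ _
    have hevh : ev h ∈ J ^ (p + 1) := hker h p hhhom hπh
    refine ⟨fun i => ev (q i), ?_, ?_, ?_⟩
    · intro i
      exact Ideal.pow_right_mono hSJ _ (hES _ ((hmemE _ _).mpr ⟨q i, hqhom i, rfl⟩))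
    · refine Submodule.sub_mem _ hzK (Ideal.sum_mem _ fun i _ => ?_)
      exact Ideal.mul_mem_left _ _ (hyK i)
    · have hevg : ev g = ∑ i, ev (q i) * ev (f i) + ev h := by
        rw [hh, map_sub, map_sum]
        simp only [map_mul]
        ring
      have e1 : z - ∑ i, ev (q i) * y i
          = (∑ i, ev (q i) * (ev (f i) - y i)) + ev h + w := by
        rw [← hewz, ← hge, hevg]
        simp only [mul_sub]
        rw [Finset.sum_sub_distrib]
        ring
      rw [e1]
      refine Submodule.add_mem _ (Submodule.add_mem _ (Ideal.sum_mem _ fun i _ => ?_) hevh) hw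
      have h1 : ev (q i) ∈ J ^ (p - n i) :=
        Ideal.pow_right_mono hSJ _ (hES _ ((hmemE _ _).mpr ⟨q i, hqhom i, rfl⟩))
      have h2 := Ideal.mul_mem_mul h1 (hyJ i)
      rw [← pow_add] at h2
      exact Ideal.pow_le_pow_right (by omega) h2
  -- iterate the approximation
  have step : ∀ (p : ℕ) (wp : {w : A // w ∈ K ∧ w ∈ J ^ p}),
      ∃ (d : {F // F ∈ T} → A) (w' : {w : A // w ∈ K ∧ w ∈ J ^ (p + 1)}),
        (∀ i, d i ∈ J ^ (p - n i)) ∧ (w' : A) = (wp : A) - ∑ i, d i * y i := by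
    intro p wp
    obtain ⟨d, hd, h1, h2⟩ := key p wp.1 wp.2.1 wp.2.2
    exact ⟨d, ⟨wp.1 - ∑ i, d i * y i, h1, h2⟩, hd, rfl⟩
  choose D W hD hW using step
  -- the eventual bound function for the completeness argument
  set M : ℕ := Finset.univ.sup n with hM
  have hnM : ∀ i, n i ≤ M := fun i => Finset.le_sup (Finset.mem_univ i)
  set mh : ℕ → ℕ := fun k => Classical.choose (hnil k) with hmh
  have hmh' : ∀ k, J ^ (mh k) ≤ I k := fun k => Classical.choose_spec (hnil k)
  set N : ℕ → ℕ := fun k => (Finset.range (k + 1)).sup mh with hN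
  have hN1 : ∀ k, J ^ (N k) ≤ I k := by
    intro k
    refine le_trans (Ideal.pow_le_pow_right ?_) (hmh' k)
    exact Finset.le_sup (Finset.mem_range.mpr (Nat.lt_succ_self k))
  have hNmono : Monotone N := by
    intro a b hab
    exact Finset.sup_mono (Finset.range_subset_range.mpr (by omega))
  -- every element of K lies in the span of the y i
  have main : ∀ z ∈ K, z ∈ Ideal.span (Set.range y) := by
    intro z hzK
    set zs : (p : ℕ) → {w : A // w ∈ K ∧ w ∈ J ^ p} :=
      fun p => Nat.rec ⟨z, hzK, by simp [Ideal.one_eq_top]⟩ (fun p wp => W p wp) p with hzs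
    set ds : ℕ → {F // F ∈ T} → A := fun p => D p (zs p) with hds
    have hdsJ : ∀ p i, ds p i ∈ J ^ (p - n i) := fun p i => hD p (zs p) i
    have hzs_succ : ∀ p, (zs (p + 1) : A) = (zs p : A) - ∑ i, ds p i * y i :=
      fun p => hW p (zs p)
    -- partial sums
    set a : {F // F ∈ T} → ℕ → A :=
      fun i k => ∑ q ∈ Finset.range (N k + M), ds q i with ha
    have cau : ∀ i, ∀ k l : ℕ, k ≤ l → a i l - a i k ∈ I k := by
      intro i k l hkl
      rw [ha]
      simp only
      rw [← Finset.sum_Ico_eq_sub _ (by have := hNmono hkl; omega)]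
      refine (hN1 k) (Ideal.sum_mem _ fun q hq => ?_)
      have hq' : N k + M ≤ q := (Finset.mem_Ico.mp hq).1
      refine Ideal.pow_le_pow_right ?_ (hdsJ q i)
      have := hnM i
      omega
    have hlim : ∀ i, ∃ ci : A, ∀ k, ci - a i k ∈ I k :=
      fun i => ((hcomplete (a i) (fun k l hkl => cau i k l hkl)).exists)
    choose cc hcc using hlim
    -- telescoping
    have tele : ∀ P : ℕ, z - ∑ i, (∑ q ∈ Finset.range P, ds q i) * y i = (zs P : A) := by
      intro P
      induction P with
      | zero => simp [hzs]
      | succ P ih =>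
        rw [hzs_succ P, ← ih]
        have : ∀ i, (∑ q ∈ Finset.range (P + 1), ds q i) * y i
            = (∑ q ∈ Finset.range P, ds q i) * y i + ds P i * y i := by
          intro i
          rw [Finset.sum_range_succ, add_mul]
        rw [Finset.sum_congr rfl fun i _ => this i, Finset.sum_add_distrib]
        ring
    have final : ∀ k, z - ∑ i, cc i * y i ∈ I k := by
      intro k
      have e1 : z - ∑ i, cc i * y i
          = (zs (N k + M) : A) - ∑ i, (cc i - a i k) * y i := by
        rw [← tele (N k + M)]
        rw [show (∑ i, (cc i - a i k) * y i)
            = ∑ i, cc i * y i - ∑ i, a i k * y i by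
          rw [← Finset.sum_sub_distrib]
          exact Finset.sum_congr rfl fun i _ => sub_mul _ _ _]
        have : ∀ i, a i k = ∑ q ∈ Finset.range (N k + M), ds q i := fun i => rfl
        simp only [this]
        ring
      rw [e1]
      refine Submodule.sub_mem _ ?_ (Ideal.sum_mem _ fun i _ => ?_)
      · refine (hN1 k) (Ideal.pow_le_pow_right (by omega) (zs (N k + M)).2.2)
      · exact Ideal.mul_mem_right _ _ (hcc i k)
    have : z - ∑ i, cc i * y i = 0 := sep _ final
    have hz' : z = ∑ i, cc i * y i := sub_eq_zero.mp this
    rw [hz']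
    exact Ideal.sum_mem _ fun i _ =>
      Ideal.mul_mem_left _ _ (Ideal.subset_span (Set.mem_range_self i))
  have hKspan : K = Ideal.span (Set.range y) := by
    refine le_antisymm main ?_
    refine Ideal.span_le.mpr ?_
    rintro _ ⟨i, rfl⟩
    exact hyK i
  rw [hKspan]
  exact Submodule.fg_def.mpr ⟨Set.range y, Set.finite_range y, rfl⟩
end
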